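/- Neyman orthogonality for the partially linear model: under the model Y = Xᵀβ₀ + g₀(S) + U, X = m₀(S) + V with E[U | X, S] = 0 and E[V | S] = 0, the Gateaux derivative at η₀ = (ℓ₀, m₀) of η ↦ E[ψ(W; β₀, η)] in any direction η − η₀ is zero, where ψ(W; β, η) = (Y − ℓ(S) − (X − m(S))ᵀβ)(X − m(S)) and ℓ₀(S) = E[Y|S]. -/

import Mathlib

open MeasureTheory
open scoped ENNReal

lemma aux_integrable_mul {Ω : Type*} [MeasurableSpace Ω] {P : Measure Ω} {f g : Ω → ℝ}
    (hf : MemLp f 2 P) (hg : MemLp g 2 P) : Integrable (fun ω => f ω * g ω) P := by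
  rw [← memLp_one_iff_integrable]
  have h : (1 : ℝ≥0∞) / 1 = 1 / 2 + 1 / 2 := by
    rw [one_div_one, ENNReal.div_add_div_same, one_add_one_eq_two,
      ENNReal.div_self (by norm_num) (by norm_num)]
  exact hg.smul hf

lemma aux_integral_mul_zero {Ω : Type*} {m0 : MeasurableSpace Ω} (P : Measure Ω)
    [IsProbabilityMeasure P] {m : MeasurableSpace Ω} (hm : m ≤ m0) {f g : Ω → ℝ}
    (hf : StronglyMeasurable[m] f) (hg : Integrable g P)
    (hfg : Integrable (fun ω => f ω * g ω) P)
    (h0 : P[g | m] =ᵐ[P] 0) : ∫ ω, f ω * g ω ∂P = 0 := by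
  have hst : SigmaFinite (P.trim hm) := IsFiniteMeasure.toSigmaFinite _
  have h1 : ∫ ω, f ω * g ω ∂P = ∫ ω, (P[f * g | m]) ω ∂P := (integral_condExp hm).symm
  have h2 : P[f * g | m] =ᵐ[P] f * P[g | m] := condExp_mul_of_stronglyMeasurable_left hf hfg hg
  have h3 : P[f * g | m] =ᵐ[P] 0 := h2.trans (by filter_upwards [h0] with ω hω; simp [hω])
  rw [h1, integral_congr_ae h3]
  simp

/-- Neyman orthogonality for the partially linear model: under
`Y = Xᵀβ₀ + g₀(S) + U`, `X = m₀(S) + V` with `E[U ∣ X, S] = 0` and `E[V ∣ S] = 0`,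
the Gateaux derivative at `η₀ = (ℓ₀, m₀)` of `η ↦ E[ψ(W; β₀, η)]` in any direction
`η − η₀` is zero, where `ψ(W; β, η) = (Y − ℓ(S) − (X − m(S))ᵀβ)(X − m(S))` and
`ℓ₀(S) = E[Y ∣ S] = m₀(S)ᵀβ₀ + g₀(S)`. -/
theorem stmt_10 {Ω : Type*} [MeasurableSpace Ω] (P : Measure Ω) [IsProbabilityMeasure P]
    (p d : ℕ) (Y U : Ω → ℝ) (X V : Ω → Fin p → ℝ) (S : Ω → Fin d → ℝ)
    (g₀ ℓ₀ ℓ : (Fin d → ℝ) → ℝ) (m₀ m : (Fin d → ℝ) → Fin p → ℝ) (β₀ : Fin p → ℝ)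
    (hmodelY : ∀ ω, Y ω = (∑ j, X ω j * β₀ j) + g₀ (S ω) + U ω)
    (hmodelX : ∀ ω j, X ω j = m₀ (S ω) j + V ω j)
    (hℓ₀ : ∀ s, ℓ₀ s = (∑ j, m₀ s j * β₀ j) + g₀ s)
    (hXmeas : Measurable X) (hSmeas : Measurable S)
    (hℓmeas : Measurable ℓ) (hℓ₀meas : Measurable ℓ₀)
    (hmmeas : Measurable m) (hm₀meas : Measurable m₀)
    (hUcond : P[U | MeasurableSpace.comap (fun ω => (X ω, S ω)) inferInstance] =ᵐ[P] 0)
    (hVcond : ∀ j, P[(fun ω => V ω j) | MeasurableSpace.comap S inferInstance] =ᵐ[P] 0)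
    (hUL2 : MemLp U 2 P) (hVL2 : ∀ j, MemLp (fun ω => V ω j) 2 P)
    (hℓL2 : MemLp (fun ω => ℓ (S ω)) 2 P) (hℓ₀L2 : MemLp (fun ω => ℓ₀ (S ω)) 2 P)
    (hmL2 : ∀ j, MemLp (fun ω => m (S ω) j) 2 P)
    (hm₀L2 : ∀ j, MemLp (fun ω => m₀ (S ω) j) 2 P) :
    deriv (fun r : ℝ => (WithLp.toLp 2 (fun j => ∫ ω,
        (Y ω - (ℓ₀ (S ω) + r * (ℓ (S ω) - ℓ₀ (S ω)))
          - ∑ k, (X ω k - (m₀ (S ω) k + r * (m (S ω) k - m₀ (S ω) k))) * β₀ k)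
        * (X ω j - (m₀ (S ω) j + r * (m (S ω) j - m₀ (S ω) j))) ∂P) :
        EuclideanSpace ℝ (Fin p))) 0 = 0 := by
  classical
  set b : Ω → ℝ := fun ω =>
    -(ℓ (S ω) - ℓ₀ (S ω)) + ∑ k, β₀ k * (m (S ω) k - m₀ (S ω) k) with hb_def
  have hΔmL2 : ∀ j, MemLp (fun ω => m (S ω) j - m₀ (S ω) j) 2 P :=
    fun j => (hmL2 j).sub (hm₀L2 j)
  have hbL2 : MemLp b 2 P := by
    apply MemLp.add
    · exact (hℓL2.sub hℓ₀L2).neg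
    · exact memLp_finsetSum _ (fun k _ => (hΔmL2 k).const_mul (β₀ k))
  -- pointwise identity for the integrand
  have hpt : ∀ (r : ℝ) (ω : Ω) (j : Fin p),
      (Y ω - (ℓ₀ (S ω) + r * (ℓ (S ω) - ℓ₀ (S ω)))
          - ∑ k, (X ω k - (m₀ (S ω) k + r * (m (S ω) k - m₀ (S ω) k))) * β₀ k)
        * (X ω j - (m₀ (S ω) j + r * (m (S ω) j - m₀ (S ω) j)))
      = U ω * V ω j
        + r * (b ω * V ω j - (m (S ω) j - m₀ (S ω) j) * U ω)
        + r ^ 2 * (-(b ω * (m (S ω) j - m₀ (S ω) j))) := by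
    intro r ω j
    have h1 : ∑ k, (X ω k - (m₀ (S ω) k + r * (m (S ω) k - m₀ (S ω) k))) * β₀ k
        = (∑ k, V ω k * β₀ k) - r * ∑ k, β₀ k * (m (S ω) k - m₀ (S ω) k) := by
      rw [Finset.mul_sum, ← Finset.sum_sub_distrib]
      exact Finset.sum_congr rfl fun k _ => by rw [hmodelX ω k]; ring
    have h2 : ∑ k, X ω k * β₀ k
        = (∑ k, m₀ (S ω) k * β₀ k) + ∑ k, V ω k * β₀ k := by
      rw [← Finset.sum_add_distrib]
      exact Finset.sum_congr rfl fun k _ => by rw [hmodelX ω k]; ring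
    rw [hmodelY, h1, h2, hmodelX ω j]
    simp only [hb_def, hℓ₀]
    ring
  -- integrability of the pieces
  have hA : ∀ j, Integrable (fun ω => U ω * V ω j) P :=
    fun j => aux_integrable_mul hUL2 (hVL2 j)
  have hB1 : ∀ j, Integrable (fun ω => b ω * V ω j) P :=
    fun j => aux_integrable_mul hbL2 (hVL2 j)
  have hB2 : ∀ j, Integrable (fun ω => (m (S ω) j - m₀ (S ω) j) * U ω) P :=
    fun j => aux_integrable_mul (hΔmL2 j) hUL2
  have hB : ∀ j, Integrable (fun ω => b ω * V ω j - (m (S ω) j - m₀ (S ω) j) * U ω) P :=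
    fun j => (hB1 j).sub (hB2 j)
  have hC : ∀ j, Integrable (fun ω => -(b ω * (m (S ω) j - m₀ (S ω) j))) P :=
    fun j => (aux_integrable_mul hbL2 (hΔmL2 j)).neg
  -- the middle coefficient vanishes
  have hBzero : ∀ j, ∫ ω, (b ω * V ω j - (m (S ω) j - m₀ (S ω) j) * U ω) ∂P = 0 := by
    intro j
    rw [integral_sub (hB1 j) (hB2 j)]
    have hz1 : ∫ ω, b ω * V ω j ∂P = 0 := by
      have hSm : Measurable[MeasurableSpace.comap S inferInstance] S :=
        Measurable.of_comap_le le_rfl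
      have hbm : Measurable[MeasurableSpace.comap S inferInstance] b := by
        apply Measurable.add
        · exact ((hℓmeas.sub hℓ₀meas).comp hSm).neg
        · apply Finset.measurable_sum
          intro k _
          exact (((measurable_pi_apply k).comp hmmeas).sub
            ((measurable_pi_apply k).comp hm₀meas)).comp hSm |>.const_mul _
      exact aux_integral_mul_zero P hSmeas.comap_le hbm.stronglyMeasurable
        ((hVL2 j).integrable one_le_two) (hB1 j) (hVcond j)
    have hz2 : ∫ ω, (m (S ω) j - m₀ (S ω) j) * U ω ∂P = 0 := by
      have hm' : MeasurableSpace.comap (fun ω => (X ω, S ω)) inferInstance ≤ _ :=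
        (hXmeas.prodMk hSmeas).comap_le
      have hpair : Measurable[MeasurableSpace.comap (fun ω => (X ω, S ω)) inferInstance]
          (fun ω => (X ω, S ω)) := Measurable.of_comap_le le_rfl
      have hSm : Measurable[MeasurableSpace.comap (fun ω => (X ω, S ω)) inferInstance] S :=
        measurable_snd.comp hpair
      exact aux_integral_mul_zero P hm'
        (((((measurable_pi_apply j).comp hmmeas).sub
          ((measurable_pi_apply j).comp hm₀meas)).comp hSm).stronglyMeasurable)
        (hUL2.integrable one_le_two) (hB2 j) hUcond
    rw [hz1, hz2, sub_zero]
  -- the vectors of coefficients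
  set Avec : Fin p → ℝ := fun j => ∫ ω, U ω * V ω j ∂P with hAvec
  set Cvec : Fin p → ℝ :=
    fun j => ∫ ω, -(b ω * (m (S ω) j - m₀ (S ω) j)) ∂P with hCvec
  have hfun : (fun r : ℝ => (WithLp.toLp 2 (fun j => ∫ ω,
        (Y ω - (ℓ₀ (S ω) + r * (ℓ (S ω) - ℓ₀ (S ω)))
          - ∑ k, (X ω k - (m₀ (S ω) k + r * (m (S ω) k - m₀ (S ω) k))) * β₀ k)
        * (X ω j - (m₀ (S ω) j + r * (m (S ω) j - m₀ (S ω) j))) ∂P) :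
        EuclideanSpace ℝ (Fin p)))
      = fun r : ℝ => WithLp.toLp 2 (Avec + (r ^ 2) • Cvec) := by
    funext r
    congr 1
    funext j
    have step1 : ∫ ω,
        (Y ω - (ℓ₀ (S ω) + r * (ℓ (S ω) - ℓ₀ (S ω)))
          - ∑ k, (X ω k - (m₀ (S ω) k + r * (m (S ω) k - m₀ (S ω) k))) * β₀ k)
        * (X ω j - (m₀ (S ω) j + r * (m (S ω) j - m₀ (S ω) j))) ∂P
        = ∫ ω, ((U ω * V ω j
            + r * (b ω * V ω j - (m (S ω) j - m₀ (S ω) j) * U ω))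
            + r ^ 2 * (-(b ω * (m (S ω) j - m₀ (S ω) j)))) ∂P :=
      integral_congr_ae (Filter.Eventually.of_forall fun ω => hpt r ω j)
    have hAB : Integrable (fun ω => U ω * V ω j
        + r * (b ω * V ω j - (m (S ω) j - m₀ (S ω) j) * U ω)) P :=
      (hA j).add ((hB j).const_mul r)
    have hCr : Integrable (fun ω => r ^ 2 * (-(b ω * (m (S ω) j - m₀ (S ω) j)))) P :=
      (hC j).const_mul (r ^ 2)
    rw [step1, integral_add hAB hCr, integral_add (hA j) ((hB j).const_mul r),
      integral_const_mul, integral_const_mul, hBzero j]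
    show _ = Avec j + (r ^ 2) • Cvec j
    simp [hAvec, hCvec, smul_eq_mul]
  rw [hfun]
  simp only [WithLp.toLp_add, WithLp.toLp_smul]
  have hd : HasDerivAt (fun r : ℝ => WithLp.toLp 2 Avec + (r ^ 2) • WithLp.toLp 2 Cvec)
      (0 + (((2 : ℕ) : ℝ) * 0 ^ (2 - 1)) • (WithLp.toLp 2 Cvec : EuclideanSpace ℝ (Fin p))) 0 :=
    (hasDerivAt_const 0 (WithLp.toLp 2 Avec : EuclideanSpace ℝ (Fin p))).add
      ((hasDerivAt_pow 2 (0 : ℝ)).smul_const (WithLp.toLp 2 Cvec : EuclideanSpace ℝ (Fin p)))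
  refine hd.deriv.trans ?_
  simp
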